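/- The Lax–Lax quartic A₅(x₁,...,x₅) = Σᵢ₌₁⁵ Π_{j≠i}(x_i − x_j) is positive semidefinite on ℝ⁵ but is not a sum of squares of real quadratic forms. -/

import Mathlib

open Finset MvPolynomial

noncomputable def ev5 (v : Fin 5 → ℝ) : MvPolynomial (Fin 5) ℝ →ₗ[ℝ] ℝ where
  toFun p := eval v p
  map_add' p q := by simp
  map_smul' r p := by simp [MvPolynomial.smul_eval]

lemma eval_mono5 (c : ℝ) (i j : Fin 5) (v : Fin 5 → ℝ) :
    eval v (monomial (Finsupp.single i 1 + Finsupp.single j 1) c) = c * v i * v j := by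
  rw [eval_monomial, Finsupp.prod_add_index (by simp) (fun a _ b₁ b₂ => pow_add _ _ _),
    Finsupp.prod_single_index (by simp), Finsupp.prod_single_index (by simp),
    pow_one, pow_one, mul_assoc]

lemma deg1_5 (d : Fin 5 →₀ ℕ) (hd : ∑ k, d k = 1) :
    ∃ j : Fin 5, d = Finsupp.single j 1 := by
  obtain ⟨j, -, hj⟩ := Finset.exists_ne_zero_of_sum_ne_zero (by simp [hd] : ∑ k, d k ≠ 0)
  have hsplit : d j + ∑ k ∈ univ.erase j, d k = 1 := by
    rw [Finset.add_sum_erase _ _ (mem_univ j)]; exact hd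
  have hdj : d j = 1 := by omega
  have hz : ∀ k ∈ univ.erase j, d k = 0 := by
    intro k hk
    have h0 : ∑ k ∈ univ.erase j, d k = 0 := by omega
    exact (Finset.sum_eq_zero_iff.mp h0) k hk
  refine ⟨j, Finsupp.ext fun k => ?_⟩
  by_cases h : k = j
  · simp [h, hdj, Finsupp.single_apply]
  · simp [Finsupp.single_apply, Ne.symm h, hz k (by simp [h])]

lemma deg2_5 (d : Fin 5 →₀ ℕ) (hd : ∑ k, d k = 2) :
    ∃ i j : Fin 5, d = Finsupp.single i 1 + Finsupp.single j 1 := by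
  obtain ⟨i, -, hi⟩ := Finset.exists_ne_zero_of_sum_ne_zero (by simp [hd] : ∑ k, d k ≠ 0)
  set e : Fin 5 →₀ ℕ := d - Finsupp.single i 1 with he
  have hd' : ∑ k, e k = 1 := by
    have hsplit : d i + ∑ k ∈ univ.erase i, d k = 2 := by
      rw [Finset.add_sum_erase _ _ (mem_univ i)]; exact hd
    have hs2 : ∑ k, e k = e i + ∑ k ∈ univ.erase i, e k := by
      rw [Finset.add_sum_erase _ _ (mem_univ i)]
    have h1 : e i = d i - 1 := by
      simp [he, Finsupp.tsub_apply, Finsupp.single_apply]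
    have h2 : ∀ k ∈ univ.erase i, e k = d k := by
      intro k hk
      have : k ≠ i := (Finset.mem_erase.mp hk).1
      simp [he, Finsupp.tsub_apply, Finsupp.single_apply, Ne.symm this]
    have h3 : ∑ k ∈ univ.erase i, e k = ∑ k ∈ univ.erase i, d k :=
      Finset.sum_congr rfl h2
    rw [hs2, h1, h3]
    omega
  obtain ⟨j, hj⟩ := deg1_5 _ hd'
  refine ⟨i, j, ?_⟩
  have hle : Finsupp.single i 1 ≤ d := by rw [Finsupp.single_le_iff]; omega
  have := congrArg (· + Finsupp.single i 1) hj
  simp only [he] at this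
  rw [tsub_add_cancel_of_le hle] at this
  rw [this, add_comm]

lemma keyid5 (h : MvPolynomial (Fin 5) ℝ) (hh : h.IsHomogeneous 2) :
    3 * eval ![0,0,0,1,-1] h =
      2 * (eval ![1,0,0,1,0] h + eval ![1,0,0,0,1] h + eval ![0,1,0,1,0] h
          + eval ![0,1,0,0,1] h + eval ![0,0,1,1,0] h + eval ![0,0,1,0,1] h)
      + 3 * eval ![0,0,0,1,1] h
      - 2 * (eval ![1,1,0,0,0] h + eval ![1,0,1,0,0] h + eval ![0,1,1,0,0] h)
      - 2 * (eval ![1,0,0,1,1] h + eval ![0,1,0,1,1] h + eval ![0,0,1,1,1] h)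
      + 2 * eval ![1,1,1,0,0] h := by
  have hL : ((3 : ℝ) • ev5 ![0,0,0,1,-1]
      - ((2:ℝ) • (ev5 ![1,0,0,1,0] + ev5 ![1,0,0,0,1] + ev5 ![0,1,0,1,0]
              + ev5 ![0,1,0,0,1] + ev5 ![0,0,1,1,0] + ev5 ![0,0,1,0,1])
        + (3:ℝ) • ev5 ![0,0,0,1,1]
        - (2:ℝ) • (ev5 ![1,1,0,0,0] + ev5 ![1,0,1,0,0] + ev5 ![0,1,1,0,0])
        - (2:ℝ) • (ev5 ![1,0,0,1,1] + ev5 ![0,1,0,1,1] + ev5 ![0,0,1,1,1])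
        + (2:ℝ) • ev5 ![1,1,1,0,0])) h = 0 := by
    rw [h.as_sum, map_sum]
    apply Finset.sum_eq_zero
    intro d hd
    have hdeg : ∑ k, d k = 2 := by
      have h2 := hh (MvPolynomial.mem_support_iff.mp hd)
      rw [← h2, Finsupp.weight_apply, Finsupp.sum_fintype]
      · simp
      · simp
    obtain ⟨i, j, rfl⟩ := deg2_5 d hdeg
    simp only [LinearMap.sub_apply, LinearMap.add_apply, LinearMap.smul_apply, smul_eq_mul,
      ev5, LinearMap.coe_mk, AddHom.coe_mk, eval_mono5]
    fin_cases i <;> fin_cases j <;> norm_num <;> ring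
  simp only [LinearMap.sub_apply, LinearMap.add_apply, LinearMap.smul_apply, smul_eq_mul,
    ev5, LinearMap.coe_mk, AddHom.coe_mk] at hL
  linarith

lemma evalA5 (x : Fin 5 → ℝ) :
    eval x (∑ i : Fin 5, ∏ j ∈ univ.erase i, (X i - X j : MvPolynomial (Fin 5) ℝ)) =
      (x 0 - x 1)*(x 0 - x 2)*(x 0 - x 3)*(x 0 - x 4)
    + ((x 1 - x 0)*(x 1 - x 2)*(x 1 - x 3)*(x 1 - x 4)
    + ((x 2 - x 0)*(x 2 - x 1)*(x 2 - x 3)*(x 2 - x 4)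
    + ((x 3 - x 0)*(x 3 - x 1)*(x 3 - x 2)*(x 3 - x 4)
    + (x 4 - x 0)*(x 4 - x 1)*(x 4 - x 2)*(x 4 - x 3)))) := by
  rw [map_sum, Fin.sum_univ_five]
  have e0 : (univ.erase (0:Fin 5)) = {1,2,3,4} := by decide
  have e1 : (univ.erase (1:Fin 5)) = {0,2,3,4} := by decide
  have e2 : (univ.erase (2:Fin 5)) = {0,1,3,4} := by decide
  have e3 : (univ.erase (3:Fin 5)) = {0,1,2,4} := by decide
  have e4 : (univ.erase (4:Fin 5)) = {0,1,2,3} := by decide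
  rw [e0, e1, e2, e3, e4]
  simp (config := { decide := true }) [Finset.prod_insert, Finset.prod_singleton, mul_assoc]
  ring

lemma permA5 (x : Fin 5 → ℝ) (σ : Equiv.Perm (Fin 5)) :
    eval (x ∘ σ) (∑ i : Fin 5, ∏ j ∈ univ.erase i, (X i - X j : MvPolynomial (Fin 5) ℝ)) =
    eval x (∑ i : Fin 5, ∏ j ∈ univ.erase i, (X i - X j : MvPolynomial (Fin 5) ℝ)) := by
  rw [map_sum, map_sum]
  conv_rhs => rw [← Equiv.sum_comp σ
    (fun i => eval x (∏ j ∈ univ.erase i, (X i - X j : MvPolynomial (Fin 5) ℝ)))]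
  refine Finset.sum_congr rfl fun i _ => ?_
  have hset : (univ.erase (σ i)) = (univ.erase i).map σ.toEmbedding := by
    ext k
    simp only [Finset.mem_erase, Finset.mem_univ, and_true, Finset.mem_map,
      Equiv.coe_toEmbedding]
    constructor
    · intro hk
      exact ⟨σ.symm k, by simp [Ne, Equiv.symm_apply_eq]; exact fun hh => hk (by simp [hh]),
        by simp⟩
    · rintro ⟨a, ha, rfl⟩
      simpa using fun hh => ha (σ.injective hh)
  rw [hset, Finset.prod_map, map_prod, map_prod]
  simp

lemma sorted5 {a b c d e : ℝ} (h1 : a ≤ b) (h2 : b ≤ c) (h3 : c ≤ d) (h4 : d ≤ e) :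
    0 ≤ (a - b)*(a - c)*(a - d)*(a - e)
    + ((b - a)*(b - c)*(b - d)*(b - e)
    + ((c - a)*(c - b)*(c - d)*(c - e)
    + ((d - a)*(d - b)*(d - c)*(d - e)
    + (e - a)*(e - b)*(e - c)*(e - d)))) := by
  have k1 : (c-b)*(d-b) ≤ (c-a)*(d-a) :=
    mul_le_mul (by linarith) (by linarith) (by linarith) (by linarith)
  have k1' : (c-b)*(d-b)*(e-b) ≤ (c-a)*(d-a)*(e-a) :=
    mul_le_mul k1 (by linarith) (by linarith) (mul_nonneg (by linarith) (by linarith))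
  have A1 : 0 ≤ (b-a)*((c-a)*(d-a)*(e-a) - (c-b)*(d-b)*(e-b)) :=
    mul_nonneg (by linarith) (by linarith)
  have k2a : (d-a)*(d-b) ≤ (e-a)*(e-b) :=
    mul_le_mul (by linarith) (by linarith) (by linarith) (by linarith)
  have k2' : (d-a)*(d-b)*(d-c) ≤ (e-a)*(e-b)*(e-c) :=
    mul_le_mul k2a (by linarith) (by linarith) (mul_nonneg (by linarith) (by linarith))
  have A2 : 0 ≤ (e-d)*((e-a)*(e-b)*(e-c) - (d-a)*(d-b)*(d-c)) :=
    mul_nonneg (by linarith) (by linarith)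
  have A3 : 0 ≤ ((c-a)*(c-b))*((d-c)*(e-c)) :=
    mul_nonneg (mul_nonneg (by linarith) (by linarith)) (mul_nonneg (by linarith) (by linarith))
  nlinarith [A1, A2, A3]

/-- The Lax–Lax quartic `A₅ = ∑_{i=1}^{5} ∏_{j≠i} (Xᵢ − Xⱼ)` is positive semidefinite on
`ℝ⁵` but is not a sum of squares of real quadratic forms. -/
theorem stmt15 :
    (∀ x : Fin 5 → ℝ,
      0 ≤ eval x (∑ i : Fin 5, ∏ j ∈ univ.erase i, (X i - X j : MvPolynomial (Fin 5) ℝ))) ∧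
    ¬ ∃ (k : ℕ) (h : Fin k → MvPolynomial (Fin 5) ℝ),
      (∀ t, (h t).IsHomogeneous 2) ∧
      (∑ i : Fin 5, ∏ j ∈ univ.erase i, (X i - X j : MvPolynomial (Fin 5) ℝ)) =
        ∑ t, (h t) ^ 2 := by
  constructor
  · intro x
    rw [← permA5 x (Tuple.sort x), evalA5]
    have hm : Monotone (x ∘ Tuple.sort x) := Tuple.monotone_sort x
    exact sorted5 (hm (by decide : (0:Fin 5) ≤ 1)) (hm (by decide : (1:Fin 5) ≤ 2))
      (hm (by decide : (2:Fin 5) ≤ 3)) (hm (by decide : (3:Fin 5) ≤ 4))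
  · rintro ⟨k, hq, hhom, heq⟩
    have hvan : ∀ (v : Fin 5 → ℝ),
        eval v (∑ i : Fin 5, ∏ j ∈ univ.erase i, (X i - X j : MvPolynomial (Fin 5) ℝ)) = 0 →
        ∀ t, eval v (hq t) = 0 := by
      intro v hv t
      have hc := congrArg (eval v) heq
      rw [hv, map_sum] at hc
      simp only [map_pow] at hc
      have hz := (Finset.sum_eq_zero_iff_of_nonneg
        (fun t _ => sq_nonneg (eval v (hq t)))).mp hc.symm t (mem_univ t)
      exact pow_eq_zero_iff (by norm_num) |>.mp hz
    have hzero : ∀ t, eval ![0,0,0,1,-1] (hq t) = 0 := by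
      intro t
      have hk := keyid5 (hq t) (hhom t)
      have e01 := hvan ![1,1,0,0,0] (by rw [evalA5]; simp) t
      have e02 := hvan ![1,0,1,0,0] (by rw [evalA5]; simp) t
      have e12 := hvan ![0,1,1,0,0] (by rw [evalA5]; simp) t
      have e03 := hvan ![1,0,0,1,0] (by rw [evalA5]; simp) t
      have e04 := hvan ![1,0,0,0,1] (by rw [evalA5]; simp) t
      have e13 := hvan ![0,1,0,1,0] (by rw [evalA5]; simp) t
      have e14 := hvan ![0,1,0,0,1] (by rw [evalA5]; simp) t
      have e23 := hvan ![0,0,1,1,0] (by rw [evalA5]; simp) t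
      have e24 := hvan ![0,0,1,0,1] (by rw [evalA5]; simp) t
      have e34 := hvan ![0,0,0,1,1] (by rw [evalA5]; simp) t
      have t034 := hvan ![1,0,0,1,1] (by rw [evalA5]; simp) t
      have t134 := hvan ![0,1,0,1,1] (by rw [evalA5]; simp) t
      have t234 := hvan ![0,0,1,1,1] (by rw [evalA5]; simp) t
      have t012 := hvan ![1,1,1,0,0] (by rw [evalA5]; simp) t
      linarith
    have hw := congrArg (eval ![0,0,0,1,-1]) heq
    rw [evalA5] at hw
    rw [map_sum] at hw
    simp only [map_pow] at hw
    rw [Finset.sum_congr rfl (fun t _ => by rw [hzero t])] at hw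
    simp at hw
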